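/- Fix a real s ≥ 0, an integer N ≥ 1, a point θ ∈ ℝ² and a C² function f : ℝ² → ℝ. Then the sum over k ∈ Z̃² with 0 < |k| ≤ N of the iterated directional derivatives of f along the basis fields satisfies ∑_{k ∈ Z̃², 0<|k|≤N} [ (A^s_k·∇(A^s_k·∇f))(θ) + (B^s_k·∇(B^s_k·∇f))(θ) ] = c_N · Δf(θ), where c_N = ∑_{k ∈ Z̃², 0<|k|≤N} k₁²/|k|^{2(s+1)} and Δf = ∂²f/∂θ₁² + ∂²f/∂θ₂². (This is the truncated version of the theorem identifying the generator of the stochastic flow with (c_N/2)Δ on cylindrical functionals F(g)(θ) = f(g(θ)).) -/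

import Mathlib

open Real

/-- Euclidean norm of a lattice point `k ∈ ℤ²`. -/
noncomputable def nZ (k : ℤ × ℤ) : ℝ := Real.sqrt ((k.1 : ℝ) ^ 2 + (k.2 : ℝ) ^ 2)

/-- `k · θ`. -/
noncomputable def dotZ (k : ℤ × ℤ) (θ : ℝ × ℝ) : ℝ := (k.1 : ℝ) * θ.1 + (k.2 : ℝ) * θ.2

/-- The vector field `A^s_k(θ) = |k|^{-(s+1)} cos(k·θ)·(k₂, -k₁)` (zero for `k = 0`). -/
noncomputable def vfA (s : ℝ) (k : ℤ × ℤ) (θ : ℝ × ℝ) : ℝ × ℝ :=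
  ((nZ k) ^ (-(s + 1)) * Real.cos (dotZ k θ)) • ((k.2 : ℝ), -(k.1 : ℝ))

/-- The vector field `B^s_k(θ) = |k|^{-(s+1)} sin(k·θ)·(k₂, -k₁)` (zero for `k = 0`). -/
noncomputable def vfB (s : ℝ) (k : ℤ × ℤ) (θ : ℝ × ℝ) : ℝ × ℝ :=
  ((nZ k) ^ (-(s + 1)) * Real.sin (dotZ k θ)) • ((k.2 : ℝ), -(k.1 : ℝ))

/-- `[k,l] = k₁ l₂ - k₂ l₁`. -/
noncomputable def crossZ (k l : ℤ × ℤ) : ℝ := (k.1 : ℝ) * (l.2 : ℝ) - (k.2 : ℝ) * (l.1 : ℝ)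

/-- The half-lattice `Z̃² = {k ∈ ℤ² : k₁ > 0, or k₁ = 0 and k₂ > 0}`. -/
def halfL (k : ℤ × ℤ) : Prop := 0 < k.1 ∨ (k.1 = 0 ∧ 0 < k.2)

open scoped Classical in
/-- The finite set `{k ∈ Z̃² : 0 < |k| ≤ N}`. -/
noncomputable def ballH (N : ℕ) : Finset (ℤ × ℤ) :=
  (Finset.Icc (-(N : ℤ), -(N : ℤ)) ((N : ℤ), (N : ℤ))).filter
    (fun k => halfL k ∧ 0 < nZ k ∧ nZ k ≤ (N : ℝ))

/-- Directional derivative of a scalar function along a vector field: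
`(X·∇h)(θ) := Dh(θ)(X(θ))`. -/
noncomputable def advS (X : ℝ × ℝ → ℝ × ℝ) (h : ℝ × ℝ → ℝ) (θ : ℝ × ℝ) : ℝ :=
  fderiv ℝ h θ (X θ)

/-! ### Auxiliary material -/

/-- The continuous linear functional `(x, y) ↦ a x + b y` on `ℝ²`. -/
noncomputable def lin2 (a b : ℝ) : (ℝ × ℝ) →L[ℝ] ℝ :=
  a • ContinuousLinearMap.fst ℝ ℝ ℝ + b • ContinuousLinearMap.snd ℝ ℝ ℝ

lemma lin2_apply (a b : ℝ) (p : ℝ × ℝ) : lin2 a b p = a * p.1 + b * p.2 := by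
  simp [lin2, smul_eq_mul]

lemma hasFDerivAt_dotZ (k : ℤ × ℤ) (x : ℝ × ℝ) :
    HasFDerivAt (fun p => dotZ k p) (lin2 (k.1 : ℝ) (k.2 : ℝ)) x := by
  have hfun : (fun p : ℝ × ℝ => dotZ k p) = ⇑(lin2 (k.1 : ℝ) (k.2 : ℝ)) := by
    funext p; simp [dotZ, lin2_apply]
  rw [hfun]
  exact (lin2 (k.1 : ℝ) (k.2 : ℝ)).hasFDerivAt

lemma fderiv_fderiv_apply {f : ℝ × ℝ → ℝ} (hf : ContDiff ℝ 2 f) (θ w z : ℝ × ℝ) :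
    fderiv ℝ (fun x => fderiv ℝ f x w) θ z = fderiv ℝ (fderiv ℝ f) θ z w := by
  have hdf : DifferentiableAt ℝ (fderiv ℝ f) θ :=
    (((hf.fderiv_right (m := 1) (by norm_num)).differentiable one_ne_zero) θ)
  have h : HasFDerivAt (fun x => fderiv ℝ f x w)
      ((ContinuousLinearMap.apply ℝ ℝ w).comp (fderiv ℝ (fderiv ℝ f) θ)) θ :=
    (ContinuousLinearMap.apply ℝ ℝ w).hasFDerivAt.comp θ hdf.hasFDerivAt
  rw [h.fderiv]
  rfl

lemma D2_expand (D2 : (ℝ × ℝ) →L[ℝ] (ℝ × ℝ) →L[ℝ] ℝ) (a b : ℝ) :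
    D2 (a, b) (a, b) = a ^ 2 * D2 (1, 0) (1, 0) + a * b * D2 (1, 0) (0, 1)
      + b * a * D2 (0, 1) (1, 0) + b ^ 2 * D2 (0, 1) (0, 1) := by
  have hv : ((a, b) : ℝ × ℝ) = a • ((1 : ℝ), (0 : ℝ)) + b • ((0 : ℝ), (1 : ℝ)) := by
    simp [Prod.ext_iff]
  rw [hv]
  simp only [map_add, map_smul, ContinuousLinearMap.add_apply,
    ContinuousLinearMap.smul_apply, smul_eq_mul]
  ring

/-- Core analytic computation for a single mode `k`. -/
lemma core_mode (s : ℝ) (k : ℤ × ℤ) (θ : ℝ × ℝ) (f : ℝ × ℝ → ℝ) (hf : ContDiff ℝ 2 f) :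
    advS (vfA s k) (advS (vfA s k) f) θ + advS (vfB s k) (advS (vfB s k) f) θ
      = ((nZ k) ^ (-(s + 1))) ^ 2
          * fderiv ℝ (fderiv ℝ f) θ ((k.2 : ℝ), -(k.1 : ℝ)) ((k.2 : ℝ), -(k.1 : ℝ)) := by
  set v : ℝ × ℝ := ((k.2 : ℝ), -(k.1 : ℝ)) with hv
  set r : ℝ := (nZ k) ^ (-(s + 1)) with hr
  set D2 := fderiv ℝ (fderiv ℝ f) θ with hD2
  have hdf : DifferentiableAt ℝ (fderiv ℝ f) θ :=
    (((hf.fderiv_right (m := 1) (by norm_num)).differentiable one_ne_zero) θ)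
  have hLv : HasFDerivAt (fun x => fderiv ℝ f x v)
      ((ContinuousLinearMap.apply ℝ ℝ v).comp D2) θ :=
    (ContinuousLinearMap.apply ℝ ℝ v).hasFDerivAt.comp θ hdf.hasFDerivAt
  have hlinv : lin2 (k.1 : ℝ) (k.2 : ℝ) v = 0 := by
    rw [lin2_apply]; simp [hv]; ring
  -- the A part
  have hAfun : advS (vfA s k) f = fun x => (r * Real.cos (dotZ k x)) * (fderiv ℝ f x v) := by
    funext x
    simp only [advS, vfA, ← hv, ← hr, map_smul, smul_eq_mul]
  have huA : HasFDerivAt (fun x => r * Real.cos (dotZ k x))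
      ((r * (-Real.sin (dotZ k θ))) • lin2 (k.1 : ℝ) (k.2 : ℝ)) θ := by
    have h1 : HasDerivAt Real.cos (-Real.sin (dotZ k θ)) (dotZ k θ) := Real.hasDerivAt_cos _
    have h2 := (h1.comp_hasFDerivAt θ (hasFDerivAt_dotZ k θ)).const_mul r
    rwa [smul_smul] at h2
  have hgA : HasFDerivAt (fun x => (r * Real.cos (dotZ k x)) * (fderiv ℝ f x v))
      ((r * Real.cos (dotZ k θ)) • ((ContinuousLinearMap.apply ℝ ℝ v).comp D2)
        + (fderiv ℝ f θ v) • ((r * (-Real.sin (dotZ k θ))) • lin2 (k.1 : ℝ) (k.2 : ℝ))) θ :=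
    huA.mul hLv
  have hA : advS (vfA s k) (advS (vfA s k) f) θ = (r * Real.cos (dotZ k θ)) ^ 2 * (D2 v v) := by
    show fderiv ℝ (advS (vfA s k) f) θ (vfA s k θ) = _
    rw [hAfun, hgA.fderiv, show vfA s k θ = (r * Real.cos (dotZ k θ)) • v from rfl, map_smul]
    simp only [ContinuousLinearMap.add_apply, ContinuousLinearMap.coe_smul',
      Pi.smul_apply, ContinuousLinearMap.coe_comp', Function.comp_apply,
      ContinuousLinearMap.apply_apply, hlinv, smul_eq_mul, mul_zero]
    ring
  -- the B part
  have hBfun : advS (vfB s k) f = fun x => (r * Real.sin (dotZ k x)) * (fderiv ℝ f x v) := by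
    funext x
    simp only [advS, vfB, ← hv, ← hr, map_smul, smul_eq_mul]
  have huB : HasFDerivAt (fun x => r * Real.sin (dotZ k x))
      ((r * Real.cos (dotZ k θ)) • lin2 (k.1 : ℝ) (k.2 : ℝ)) θ := by
    have h1 : HasDerivAt Real.sin (Real.cos (dotZ k θ)) (dotZ k θ) := Real.hasDerivAt_sin _
    have h2 := (h1.comp_hasFDerivAt θ (hasFDerivAt_dotZ k θ)).const_mul r
    rwa [smul_smul] at h2
  have hgB : HasFDerivAt (fun x => (r * Real.sin (dotZ k x)) * (fderiv ℝ f x v))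
      ((r * Real.sin (dotZ k θ)) • ((ContinuousLinearMap.apply ℝ ℝ v).comp D2)
        + (fderiv ℝ f θ v) • ((r * Real.cos (dotZ k θ)) • lin2 (k.1 : ℝ) (k.2 : ℝ))) θ :=
    huB.mul hLv
  have hB : advS (vfB s k) (advS (vfB s k) f) θ = (r * Real.sin (dotZ k θ)) ^ 2 * (D2 v v) := by
    show fderiv ℝ (advS (vfB s k) f) θ (vfB s k θ) = _
    rw [hBfun, hgB.fderiv, show vfB s k θ = (r * Real.sin (dotZ k θ)) • v from rfl, map_smul]
    simp only [ContinuousLinearMap.add_apply, ContinuousLinearMap.coe_smul',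
      Pi.smul_apply, ContinuousLinearMap.coe_comp', Function.comp_apply,
      ContinuousLinearMap.apply_apply, hlinv, smul_eq_mul, mul_zero]
    ring
  rw [hA, hB]
  have hpyth := Real.sin_sq_add_cos_sq (dotZ k θ)
  linear_combination (r ^ 2 * ((D2 v) v)) * hpyth

lemma nZ_negsnd (a b : ℤ) : nZ (a, -b) = nZ (a, b) := by
  unfold nZ; push_cast; ring_nf

lemma nZ_swap (a b : ℤ) : nZ (b, a) = nZ (a, b) := by
  unfold nZ; rw [add_comm]

lemma nZ_negneg_swap (a b : ℤ) : nZ (-b, -a) = nZ (a, b) := by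
  unfold nZ; push_cast; ring_nf

lemma mem_ballH {N : ℕ} {k : ℤ × ℤ} :
    k ∈ ballH N ↔ (-(N : ℤ) ≤ k.1 ∧ k.1 ≤ N ∧ -(N : ℤ) ≤ k.2 ∧ k.2 ≤ N)
      ∧ halfL k ∧ 0 < nZ k ∧ nZ k ≤ (N : ℝ) := by
  classical
  unfold ballH
  rw [Finset.mem_filter, Finset.mem_Icc]
  constructor
  · rintro ⟨⟨h1, h2⟩, h3⟩
    exact ⟨⟨h1.1, h2.1, h1.2, h2.2⟩, h3⟩
  · rintro ⟨⟨h1, h2, h3, h4⟩, h5⟩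
    exact ⟨⟨⟨h1, h3⟩, ⟨h2, h4⟩⟩, h5⟩

/-- The cross terms cancel over the half-lattice. -/
lemma cross_sum_zero (p : ℝ) (N : ℕ) :
    ∑ k ∈ ballH N, ((k.1 : ℝ) * (k.2 : ℝ)) / (nZ k) ^ p = 0 := by
  apply Finset.sum_involution (g := fun k _ => if k.1 = 0 then k else (k.1, -k.2))
  · intro a ha
    by_cases h : a.1 = 0
    · simp only [h, if_true]
      push_cast [h]
      ring
    · simp only [h, if_false]
      have : nZ (a.1, -a.2) = nZ a := nZ_negsnd a.1 a.2
      rw [this]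
      push_cast
      ring
  · intro a ha hne
    by_cases h : a.1 = 0
    · exfalso; apply hne; push_cast [h]; ring
    · simp only [h, if_false]
      intro hEq
      have h2 : a.2 = -a.2 := by
        have := congrArg Prod.snd hEq
        simpa using this.symm
      have ha2 : a.2 = 0 := by omega
      apply hne
      rw [ha2]; push_cast; ring
  · intro a ha
    by_cases h : a.1 = 0
    · simp [h]
    · simp [h]
  · intro a ha
    by_cases h : a.1 = 0
    · simpa [h] using ha
    · simp only [h, if_false]
      rw [mem_ballH] at ha ⊢
      obtain ⟨⟨h1, h2, h3, h4⟩, h5, h6, h7⟩ := ha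
      refine ⟨⟨h1, h2, by omega, by omega⟩, ?_, ?_, ?_⟩
      · rcases h5 with h5 | h5
        · exact Or.inl h5
        · exact absurd h5.1 h
      · rwa [nZ_negsnd]
      · rwa [nZ_negsnd]

/-- The two diagonal sums coincide over the half-lattice. -/
lemma diag_sum_eq (p : ℝ) (N : ℕ) :
    ∑ k ∈ ballH N, ((k.2 : ℝ) ^ 2) / (nZ k) ^ p
      = ∑ k ∈ ballH N, ((k.1 : ℝ) ^ 2) / (nZ k) ^ p := by
  have hmem : ∀ a ∈ ballH N, (if 0 ≤ a.2 then ((a.2, a.1) : ℤ × ℤ) else (-a.2, -a.1)) ∈ ballH N := by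
    intro a ha
    rw [mem_ballH] at ha ⊢
    obtain ⟨⟨h1, h2, h3, h4⟩, h5, h6, h7⟩ := ha
    by_cases h : 0 ≤ a.2
    · simp only [h, if_true]
      refine ⟨⟨by omega, by omega, by omega, by omega⟩, ?_, ?_, ?_⟩
      · rcases h5 with h5 | h5
        · rcases lt_or_eq_of_le h with h' | h'
          · exact Or.inl h'
          · exact Or.inr ⟨h'.symm, h5⟩
        · exact Or.inl h5.2
      · rwa [nZ_swap]
      · rwa [nZ_swap]
    · simp only [h, if_false]
      push_neg at h
      refine ⟨⟨by omega, by omega, by omega, by omega⟩, ?_, ?_, ?_⟩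
      · exact Or.inl (by omega)
      · rwa [nZ_negneg_swap]
      · rwa [nZ_negneg_swap]
  have hinv : ∀ a ∈ ballH N,
      (fun b : ℤ × ℤ => if 0 ≤ b.2 then ((b.2, b.1) : ℤ × ℤ) else (-b.2, -b.1))
        ((if 0 ≤ a.2 then ((a.2, a.1) : ℤ × ℤ) else (-a.2, -a.1))) = a := by
    intro a ha
    rw [mem_ballH] at ha
    obtain ⟨_, h5, _, _⟩ := ha
    by_cases h : 0 ≤ a.2
    · simp only [h, if_true]
      by_cases h1 : 0 ≤ a.1
      · simp [h1]
      · exfalso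
        rcases h5 with h5 | h5
        · omega
        · omega
    · simp only [h, if_false]
      have h1 : 0 < a.1 := by
        rcases h5 with h5 | h5
        · exact h5
        · omega
      have : ¬ (0 : ℤ) ≤ -a.1 := by omega
      simp [this]; omega
  refine Finset.sum_nbij'
    (fun a => if 0 ≤ a.2 then ((a.2, a.1) : ℤ × ℤ) else (-a.2, -a.1))
    (fun a => if 0 ≤ a.2 then ((a.2, a.1) : ℤ × ℤ) else (-a.2, -a.1))
    hmem hmem hinv hinv ?_
  intro a ha
  by_cases h : 0 ≤ a.2
  · simp only [h, if_true]
    rw [nZ_swap]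
  · simp only [h, if_false]
    rw [nZ_negneg_swap]
    push_cast
    ring_nf

theorem generator_is_laplacian (s : ℝ) (hs : 0 ≤ s) (N : ℕ) (hN : 1 ≤ N)
    (θ : ℝ × ℝ) (f : ℝ × ℝ → ℝ) (hf : ContDiff ℝ 2 f) :
    ∑ k ∈ ballH N,
        (advS (vfA s k) (advS (vfA s k) f) θ + advS (vfB s k) (advS (vfB s k) f) θ)
      = (∑ k ∈ ballH N, (k.1 : ℝ) ^ 2 / (nZ k) ^ (2 * (s + 1))) *
          (fderiv ℝ (fun x => fderiv ℝ f x (1, 0)) θ (1, 0)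
            + fderiv ℝ (fun x => fderiv ℝ f x (0, 1)) θ (0, 1)) := by
  set D2 := fderiv ℝ (fderiv ℝ f) θ with hD2
  set C1 : ℝ := D2 (1, 0) (1, 0) with hC1
  set C2 : ℝ := D2 (1, 0) (0, 1) with hC2
  set C3 : ℝ := D2 (0, 1) (1, 0) with hC3
  set C4 : ℝ := D2 (0, 1) (0, 1) with hC4
  have hH1 : fderiv ℝ (fun x => fderiv ℝ f x (1, 0)) θ (1, 0) = C1 :=
    fderiv_fderiv_apply hf θ (1, 0) (1, 0)
  have hH2 : fderiv ℝ (fun x => fderiv ℝ f x (0, 1)) θ (0, 1) = C4 :=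
    fderiv_fderiv_apply hf θ (0, 1) (0, 1)
  rw [hH1, hH2]
  have hterm : ∀ k ∈ ballH N,
      advS (vfA s k) (advS (vfA s k) f) θ + advS (vfB s k) (advS (vfB s k) f) θ
        = ((k.2 : ℝ) ^ 2 / (nZ k) ^ (2 * (s + 1))) * C1
          - ((k.1 : ℝ) * (k.2 : ℝ) / (nZ k) ^ (2 * (s + 1))) * C2
          - ((k.1 : ℝ) * (k.2 : ℝ) / (nZ k) ^ (2 * (s + 1))) * C3
          + ((k.1 : ℝ) ^ 2 / (nZ k) ^ (2 * (s + 1))) * C4 := by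
    intro k hk
    have hpos : 0 < nZ k := (mem_ballH.mp hk).2.2.1
    rw [core_mode s k θ f hf, ← hD2, D2_expand D2 (k.2 : ℝ) (-(k.1 : ℝ)), ← hC1, ← hC2, ← hC3,
      ← hC4]
    have hr2 : ((nZ k) ^ (-(s + 1))) ^ 2 = ((nZ k) ^ (2 * (s + 1)))⁻¹ := by
      rw [Real.rpow_neg hpos.le, inv_pow, sq, ← Real.rpow_add hpos]
      ring_nf
    rw [hr2]
    field_simp
    ring
  rw [Finset.sum_congr rfl hterm]
  have hsplit : ∑ k ∈ ballH N,
      (((k.2 : ℝ) ^ 2 / (nZ k) ^ (2 * (s + 1))) * C1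
        - ((k.1 : ℝ) * (k.2 : ℝ) / (nZ k) ^ (2 * (s + 1))) * C2
        - ((k.1 : ℝ) * (k.2 : ℝ) / (nZ k) ^ (2 * (s + 1))) * C3
        + ((k.1 : ℝ) ^ 2 / (nZ k) ^ (2 * (s + 1))) * C4)
      = (∑ k ∈ ballH N, (k.2 : ℝ) ^ 2 / (nZ k) ^ (2 * (s + 1))) * C1
        - (∑ k ∈ ballH N, (k.1 : ℝ) * (k.2 : ℝ) / (nZ k) ^ (2 * (s + 1))) * C2
        - (∑ k ∈ ballH N, (k.1 : ℝ) * (k.2 : ℝ) / (nZ k) ^ (2 * (s + 1))) * C3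
        + (∑ k ∈ ballH N, (k.1 : ℝ) ^ 2 / (nZ k) ^ (2 * (s + 1))) * C4 := by
    rw [Finset.sum_add_distrib, Finset.sum_sub_distrib, Finset.sum_sub_distrib,
      ← Finset.sum_mul, ← Finset.sum_mul, ← Finset.sum_mul, ← Finset.sum_mul]
  rw [hsplit, diag_sum_eq, cross_sum_zero]
  ring
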